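/- Let A be an abelian symmetric monoidal category with right-exact tensor, F a ⊗-flat object, f : 𝟙 → F. The class B₀ = { M ∈ A : f^{⊗n} ⊗ id_M = 0 for some n ≥ 1 } is a Serre ⊗-ideal: it is closed under subobjects, quotients, extensions, and tensoring with arbitrary objects of A. -/

import Mathlib

open CategoryTheory CategoryTheory.Limits CategoryTheory.MonoidalCategory
  CategoryTheory.Pretriangulated

namespace Balmer

universe w v u v₂ u₂ v₃ u₃ v₄ u₄

variable {C : Type u} [Category.{v} C]

/-- An object is finitely presented if its coYoneda functor preserves filtered colimits. -/
def IsFP (X : C) : Prop :=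
  ∀ (J : Type v) [SmallCategory J] [IsFiltered J],
    Nonempty (PreservesColimitsOfShape J (coyoneda.obj (Opposite.op X)))

section Monoidal
variable [MonoidalCategory C]

/-- `n`-fold tensor power of an object. -/
def tpow (x : C) : ℕ → C
  | 0 => 𝟙_ C
  | n + 1 => x ⊗ tpow x n

/-- `n`-fold tensor power of a morphism. -/
def tpowHom {x y : C} (f : x ⟶ y) : ∀ n, tpow x n ⟶ tpow y n
  | 0 => 𝟙 _
  | n + 1 => f ⊗ₘ tpowHom f n

/-- `n`-fold tensor power of a morphism out of the unit, as a morphism out of the unit. -/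
def upow {z : C} (g : 𝟙_ C ⟶ z) : ∀ n, 𝟙_ C ⟶ tpow z n
  | 0 => 𝟙 _
  | n + 1 => (λ_ (𝟙_ C)).inv ≫ (g ⊗ₘ upow g n)

/-- A ⊗-multiplicative class of objects: contains the unit and is closed under `⊗`. -/
def IsTensorMultiplicative (S : Set C) : Prop :=
  𝟙_ C ∈ S ∧ ∀ ⦃a⦄, a ∈ S → ∀ ⦃b⦄, b ∈ S → (a ⊗ b) ∈ S

end Monoidal

section SerrePlain
variable [Abelian C]

/-- A Serre subcategory (as a class of objects): contains the zeros and is closed under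
subobjects, quotients and extensions. -/
def IsSerre (B : Set C) : Prop :=
  (∀ X : C, IsZero X → X ∈ B) ∧
  (∀ ⦃X Y : C⦄ (i : X ⟶ Y), Mono i → Y ∈ B → X ∈ B) ∧
  (∀ ⦃X Y : C⦄ (p : X ⟶ Y), Epi p → X ∈ B → Y ∈ B) ∧
  (∀ S : ShortComplex C, S.ShortExact → S.X₁ ∈ B → S.X₃ ∈ B → S.X₂ ∈ B)

end SerrePlain

section SerrePlain2
variable [Abelian C]

/-- A Serre subcategory closed under (small) coproducts (no tensor). -/
def IsLocalizingSub (L : Set C) : Prop :=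
  IsSerre L ∧ ∀ (J : Type v) (g : J → C) [HasCoproduct g], (∀ j, g j ∈ L) → (∐ g) ∈ L

/-- The localizing subcategory generated by a class of objects (no tensor). -/
def LocSubGen (S : Set C) : Set C :=
  {M | ∀ L : Set C, IsLocalizingSub L → S ⊆ L → M ∈ L}

end SerrePlain2

section Serre
variable [Abelian C] [MonoidalCategory C]

/-- A Serre ⊗-ideal: a Serre subcategory closed under tensoring with arbitrary objects. -/
def IsSerreTensorIdeal (B : Set C) : Prop :=
  IsSerre B ∧ ∀ (X : C) ⦃M : C⦄, M ∈ B → (X ⊗ M) ∈ B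

/-- A maximal proper Serre ⊗-ideal. -/
def IsMaxSerreTensorIdeal (B : Set C) : Prop :=
  IsSerreTensorIdeal B ∧ 𝟙_ C ∉ B ∧
    ∀ B' : Set C, IsSerreTensorIdeal B' → 𝟙_ C ∉ B' → B ⊆ B' → B' = B

/-- The Serre ⊗-ideal generated by a class of objects. -/
def SerreTensorGen (S : Set C) : Set C :=
  {M | ∀ L : Set C, IsSerreTensorIdeal L → S ⊆ L → M ∈ L}

/-- A localizing ⊗-ideal: a Serre ⊗-ideal closed under (small) coproducts. -/
def IsLocalizingTensorIdeal (L : Set C) : Prop :=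
  IsSerreTensorIdeal L ∧
    ∀ (J : Type v) (g : J → C) [HasCoproduct g], (∀ j, g j ∈ L) → (∐ g) ∈ L

/-- The localizing ⊗-ideal generated by a class of objects. -/
def LocTensorGen (S : Set C) : Set C :=
  {M | ∀ L : Set C, IsLocalizingTensorIdeal L → S ⊆ L → M ∈ L}

/-- A Serre ⊗-ideal of the full (abelian, monoidal) subcategory of objects in `P`
(e.g. `P` = finitely presented objects). -/
def IsSerreTensorIdealIn (P B : Set C) : Prop :=
  B ⊆ P ∧
  (∀ X : C, IsZero X → X ∈ P → X ∈ B) ∧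
  (∀ ⦃X Y : C⦄ (i : X ⟶ Y), Mono i → X ∈ P → Y ∈ B → X ∈ B) ∧
  (∀ ⦃X Y : C⦄ (p : X ⟶ Y), Epi p → Y ∈ P → X ∈ B → Y ∈ B) ∧
  (∀ S : ShortComplex C, S.ShortExact → S.X₂ ∈ P → S.X₁ ∈ B → S.X₃ ∈ B → S.X₂ ∈ B) ∧
  (∀ ⦃X : C⦄, X ∈ P → ∀ ⦃M : C⦄, M ∈ B → (X ⊗ M) ∈ B)

/-- A maximal proper Serre ⊗-ideal of the full subcategory of objects in `P`. -/
def IsMaxSerreTensorIdealIn (P B : Set C) : Prop :=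
  IsSerreTensorIdealIn P B ∧ 𝟙_ C ∉ B ∧
    ∀ B' : Set C, IsSerreTensorIdealIn P B' → 𝟙_ C ∉ B' → B ⊆ B' → B' = B

end Serre

section Tri
variable [Preadditive C] [HasZeroObject C] [HasShift C ℤ]
  [∀ n : ℤ, (shiftFunctor C n).Additive] [Pretriangulated C] [MonoidalCategory C]

/-- A thick ⊗-ideal of a tensor-triangulated category. -/
def IsThickTensorIdeal (P : Set C) : Prop :=
  (∀ ⦃x y : C⦄, (x ≅ y) → x ∈ P → y ∈ P) ∧
  (∀ (x : C) (n : ℤ), x ∈ P → (shiftFunctor C n).obj x ∈ P) ∧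
  (∀ T : Triangle C, T ∈ (distTriang C) → T.obj₁ ∈ P → T.obj₂ ∈ P → T.obj₃ ∈ P) ∧
  (∀ x y : C, (∃ (i : x ⟶ y) (r : y ⟶ x), i ≫ r = 𝟙 x) → y ∈ P → x ∈ P) ∧
  (∀ (x : C) ⦃y : C⦄, y ∈ P → (x ⊗ y) ∈ P)

/-- A prime thick ⊗-ideal. -/
def IsPrimeThickTensorIdeal (P : Set C) : Prop :=
  IsThickTensorIdeal P ∧ (∃ x : C, x ∉ P) ∧
    ∀ x y : C, (x ⊗ y) ∈ P → x ∈ P ∨ y ∈ P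

end Tri


section Stmt5Aux

variable {A : Type u} [Category.{v} A] [Abelian A] [MonoidalCategory A]
    [SymmetricCategory A] [MonoidalPreadditive A]
    [∀ X : A, PreservesFiniteColimits (tensorLeft X)]
    (F : A) (hF : PreservesFiniteLimits (tensorLeft F)) (f : 𝟙_ A ⟶ F)

include hF in
lemma tpow_flat (n : ℕ) : PreservesFiniteLimits (tensorLeft (tpow F n)) := by
  induction n with
  | zero =>
    exact preservesFiniteLimits_of_natIso (leftUnitorNatIso A).symm
  | succ n ih =>
    haveI := ih
    haveI := comp_preservesFiniteLimits (tensorLeft (tpow F n)) (tensorLeft F)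
    exact preservesFiniteLimits_of_natIso (tensorLeftTensor F (tpow F n)).symm

/-- If `upow f n` kills `M`, it kills `Z ⊗ M` for any `Z`. -/
lemma upow_whisker_tensor_zero (n : ℕ) {M : A} (h : upow f n ▷ M = 0) (Z : A) :
    upow f n ▷ (Z ⊗ M) = 0 := by
  have hMZ : upow f n ▷ (M ⊗ Z) = 0 := by
    rw [whiskerRight_tensor, h]
    simp
  have he : upow f n ▷ (Z ⊗ M) =
      (𝟙_ A ◁ (β_ Z M).hom ≫ upow f n ▷ (M ⊗ Z)) ≫ tpow F n ◁ (β_ Z M).inv := by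
    rw [whisker_exchange]
    simp
  rw [he, hMZ]
  simp

/-- Decomposition of `upow f (m + n)` through `upow f m ⊗ upow f n`. -/
lemma upow_add (m n : ℕ) :
    ∃ μ : tpow F m ⊗ tpow F n ≅ tpow F (m + n),
      upow f (m + n) = (λ_ (𝟙_ A)).inv ≫ (upow f m ⊗ₘ upow f n) ≫ μ.hom := by
  induction m with
  | zero =>
    rw [Nat.zero_add]
    refine ⟨λ_ (tpow F n), ?_⟩
    show upow f n = (λ_ (𝟙_ A)).inv ≫ (𝟙 (𝟙_ A) ⊗ₘ upow f n) ≫ (λ_ (tpow F n)).hom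
    rw [id_tensorHom, leftUnitor_naturality, Iso.inv_hom_id_assoc]
  | succ m ih =>
    obtain ⟨μ, hμ⟩ := ih
    rw [Nat.add_right_comm]
    refine ⟨α_ F (tpow F m) (tpow F n) ≪≫ whiskerLeftIso F μ, ?_⟩
    show (λ_ (𝟙_ A)).inv ≫ (f ⊗ₘ upow f (m + n)) =
      (λ_ (𝟙_ A)).inv ≫ (((λ_ (𝟙_ A)).inv ≫ (f ⊗ₘ upow f m)) ⊗ₘ upow f n) ≫
        (α_ F (tpow F m) (tpow F n)).hom ≫ F ◁ μ.hom
    rw [hμ]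
    simp only [MonoidalCategory.tensorHom_def, comp_whiskerRight, whisker_assoc, MonoidalCategory.whiskerLeft_comp,
      Category.assoc]
    monoidal

/-- The key killing lemma: if `upow f n ▷ M` factors through `W` and `upow f m` kills `W`,
then `upow f (m + n)` kills `M`. -/
lemma upow_kill (m n : ℕ) {M W : A} (k : 𝟙_ A ⊗ M ⟶ W) (e : W ⟶ tpow F n ⊗ M)
    (hk : upow f n ▷ M = k ≫ e) (hW : upow f m ▷ W = 0) :
    upow f (m + n) ▷ M = 0 := by
  obtain ⟨μ, hμ⟩ := upow_add F f m n
  rw [hμ]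
  simp only [comp_whiskerRight, MonoidalCategory.tensorHom_def, Category.assoc, whisker_assoc, hk,
    MonoidalCategory.whiskerLeft_comp]
  rw [associator_naturality_left_assoc, ← whisker_exchange_assoc, hW]
  simp

end Stmt5Aux

/-- With `F` ⊗-flat and `f : 𝟙 ⟶ F`, the class
`B₀ = {M | f^{⊗n} ⊗ id_M = 0 for some n ≥ 1}` is a Serre ⊗-ideal. -/
theorem stmt5 {A : Type u} [Category.{v} A] [Abelian A] [MonoidalCategory A]
    [SymmetricCategory A] [MonoidalPreadditive A]
    [∀ X : A, PreservesFiniteColimits (tensorLeft X)]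
    (F : A) (hF : PreservesFiniteLimits (tensorLeft F)) (f : 𝟙_ A ⟶ F) :
    IsSerreTensorIdeal {M : A | ∃ n : ℕ, 1 ≤ n ∧ upow f n ▷ M = 0} := by
  classical
  have hzero : ∀ (n : ℕ) {M : A}, IsZero M → upow f n ▷ M = 0 := by
    intro n M hM
    have hz : IsZero ((tensorLeft (tpow F n)).obj M) := (tensorLeft (tpow F n)).map_isZero hM
    exact hz.eq_of_tgt _ _
  refine ⟨⟨?_, ?_, ?_, ?_⟩, ?_⟩
  · -- zero objects
    intro X hX
    exact ⟨1, le_refl 1, hzero 1 hX⟩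
  · -- subobjects
    rintro X Y i hi ⟨n, hn, h0⟩
    refine ⟨n, hn, ?_⟩
    haveI := tpow_flat F hF n
    haveI : Mono ((tensorLeft (tpow F n)).map i) := inferInstance
    have hmono : Mono (tpow F n ◁ i) := this
    rw [← cancel_mono (tpow F n ◁ i), ← whisker_exchange, h0]
    simp
  · -- quotients
    rintro X Y p hp ⟨n, hn, h0⟩
    refine ⟨n, hn, ?_⟩
    haveI : Epi ((tensorLeft (𝟙_ A)).map p) := inferInstance
    have hepi : Epi (𝟙_ A ◁ p) := this
    rw [← cancel_epi (𝟙_ A ◁ p), whisker_exchange, h0]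
    simp
  · -- extensions
    rintro S hS ⟨m, hm, h1⟩ ⟨n, hn, h3⟩
    haveI := tpow_flat F hF n
    have hSE : (S.map (tensorLeft (tpow F n))).ShortExact :=
      hS.map_of_exact (tensorLeft (tpow F n))
    have h0 : upow f n ▷ S.X₂ ≫ (S.map (tensorLeft (tpow F n))).g = 0 := by
      show upow f n ▷ S.X₂ ≫ tpow F n ◁ S.g = 0
      rw [← whisker_exchange, h3]
      simp
    let k : 𝟙_ A ⊗ S.X₂ ⟶ tpow F n ⊗ S.X₁ :=
      hSE.fIsKernel.lift (KernelFork.ofι (upow f n ▷ S.X₂) h0)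
    have hk : k ≫ tpow F n ◁ S.f = upow f n ▷ S.X₂ :=
      hSE.fIsKernel.fac (KernelFork.ofι (upow f n ▷ S.X₂) h0) WalkingParallelPair.zero
    have hW : upow f m ▷ (tpow F n ⊗ S.X₁) = 0 :=
      upow_whisker_tensor_zero F f m h1 (tpow F n)
    exact ⟨m + n, le_trans hm (Nat.le_add_right m n),
      upow_kill F f m n k (tpow F n ◁ S.f) hk.symm hW⟩
  · -- tensor ideal
    rintro X M ⟨n, hn, h0⟩
    exact ⟨n, hn, upow_whisker_tensor_zero F f n h0 X⟩

end Balmer
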